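/- arXiv:2312.06690 — 3 statements merged into one kernel-verified Lean document; each statement's English description precedes it below -/
import Mathlib

section
/- Let (A, 𝒜) be a measurable space and let f : A × ℝ × ℝⁿ → ℝ be 𝒜 ⊗ Borel-measurable, such that for every a ∈ A the function f(a,·,·) is concave and satisfies |f(a,y₁,z₁) − f(a,y₂,z₂)| ≤ C(|y₁ − y₂| + ‖z₁ − z₂‖) for all (y₁,z₁), (y₂,z₂) ∈ ℝ × ℝⁿ, with the same constant C > 0. Define F(a,β,γ) = sup_{(y,z) ∈ ℝ × ℝⁿ} ( f(a,y,z) − βy − γ·z ) ∈ ℝ ∪ {+∞}. Let Y : A → ℝ and Z : A → ℝⁿ be measurable. Then there exist measurable functions β̄ : A → [−C,C] and γ̄ : A → {γ ∈ ℝⁿ : ‖γ‖ ≤ C} such that for every a ∈ A, F(a, β̄(a), γ̄(a)) < ∞ and f(a, Y(a), Z(a)) = F(a, β̄(a), γ̄(a)) + β̄(a)·Y(a) + γ̄(a)·Z(a). Moreover, if μ is a measure on (A,𝒜) for which a ↦ f(a,Y(a),Z(a)), Y and Z are square-integrable, then a ↦ F(a, β̄(a), γ̄(a)) is μ-square-integrable.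 -/
open MeasureTheory Metric
open scoped RealInnerProductSpace NNReal

private lemma ocs_exists_supergrad {E : Type*} [NormedAddCommGroup E] [InnerProductSpace ℝ E]
    [CompleteSpace E] (C : ℝ) (hC : 0 < C) (g : ℝ × E → ℝ)
    (hconc : ConcaveOn ℝ Set.univ g)
    (hLip : ∀ p q : ℝ × E, |g p - g q| ≤ C * (|p.1 - q.1| + ‖p.2 - q.2‖))
    (x : ℝ × E) :
    ∃ v : ℝ × E, |v.1| ≤ C ∧ ‖v.2‖ ≤ C ∧
      ∀ p : ℝ × E, g p ≤ g x + (v.1 * (p.1 - x.1) + ⟪v.2, p.2 - x.2⟫) := by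
  classical
  set h : ℝ × E → ℝ := fun p => g x - g (x + p) with hh
  have hgc : Continuous g := by
    refine (LipschitzWith.of_dist_le_mul (K := Real.toNNReal (2 * C)) (f := g) fun p q => ?_).continuous
    have h1 : |p.1 - q.1| ≤ dist p q := by
      calc |p.1 - q.1| = dist p.1 q.1 := (Real.dist_eq _ _).symm
        _ ≤ max (dist p.1 q.1) (dist p.2 q.2) := le_max_left _ _
        _ = dist p q := (Prod.dist_eq (x := p) (y := q)).symm
    have h2 : ‖p.2 - q.2‖ ≤ dist p q := by
      calc ‖p.2 - q.2‖ = dist p.2 q.2 := (dist_eq_norm _ _).symm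
        _ ≤ max (dist p.1 q.1) (dist p.2 q.2) := le_max_right _ _
        _ = dist p q := (Prod.dist_eq (x := p) (y := q)).symm
    have := hLip p q
    rw [Real.dist_eq]
    have hcoe : ((Real.toNNReal (2 * C) : ℝ≥0) : ℝ) = 2 * C := Real.coe_toNNReal _ (by positivity)
    rw [hcoe]
    nlinarith [dist_nonneg (x := p) (y := q)]
  have hhconv : ∀ (p q : ℝ × E) (a b : ℝ), 0 ≤ a → 0 ≤ b → a + b = 1 →
      h (a • p + b • q) ≤ a * h p + b * h q := by
    intro p q a b ha hb hab
    have hxx : a • x + b • x = x := by rw [← add_smul, hab, one_smul]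
    have hx : x + (a • p + b • q) = a • (x + p) + b • (x + q) := by
      rw [smul_add, smul_add]
      nth_rewrite 1 [← hxx]
      abel
    have hcc := hconc.2 (Set.mem_univ (x + p)) (Set.mem_univ (x + q)) ha hb hab
    simp only [smul_eq_mul] at hcc
    simp only [hh, hx]
    have hgg : a * g x + b * g x = g x := by rw [← add_mul, hab, one_mul]
    linarith [hcc]
  have hhcont : Continuous h := continuous_const.sub (hgc.comp (continuous_const.add continuous_id))
  set s : Set ((ℝ × E) × ℝ) := {q | h q.1 < q.2} with hs
  have hsopen : IsOpen s := by
    have : s = (fun q : (ℝ × E) × ℝ => q.2 - h q.1) ⁻¹' Set.Ioi 0 := by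
      ext q; simp [hs, sub_pos]
    rw [this]
    exact isOpen_Ioi.preimage (continuous_snd.sub (hhcont.comp continuous_fst))
  have hsconv : Convex ℝ s := by
    rintro ⟨p, t⟩ hp ⟨q, u⟩ hq a b ha hb hab
    simp only [hs, Set.mem_setOf_eq] at hp hq ⊢
    have h1 := hhconv p q a b ha hb hab
    have h2 : a * h p + b * h q < a * t + b * u := by
      rcases ha.eq_or_lt with rfl | ha'
      · have hb1 : b = 1 := by linarith
        subst hb1; simpa using hq
      · nlinarith
    have h3 : (a • ((p, t) : (ℝ × E) × ℝ) + b • ((q, u) : (ℝ × E) × ℝ)).1 = a • p + b • q := rfl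
    have h4 : (a • ((p, t) : (ℝ × E) × ℝ) + b • ((q, u) : (ℝ × E) × ℝ)).2 = a * t + b * u := rfl
    rw [h3, h4]
    exact lt_of_le_of_lt h1 h2
  have h0 : h 0 = 0 := by simp [hh]
  have h00 : ((0, 0) : (ℝ × E) × ℝ) ∉ s := by
    simp [hs, h0]
  obtain ⟨L, hL⟩ := geometric_hahn_banach_open_point hsconv hsopen h00
  have hL0 : L ((0 : ℝ × E), (0 : ℝ)) = 0 := by
    have : ((0, 0) : (ℝ × E) × ℝ) = 0 := rfl
    rw [this, map_zero]
  set c : ℝ := L (0, 1) with hcdef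
  have hc : c < 0 := by
    have := hL (0, 1) (by simp [hs, h0])
    rwa [hL0] at this
  have hLsplit : ∀ (p : ℝ × E) (t : ℝ), L (p, t) = L (p, 0) + t * c := by
    intro p t
    have heq : ((p, t) : (ℝ × E) × ℝ) = (p, (0 : ℝ)) + t • ((0 : ℝ × E), (1 : ℝ)) := by
      simp [Prod.ext_iff]
    rw [heq, map_add, L.map_smul, smul_eq_mul, hcdef]
  have hkey : ∀ p : ℝ × E, L (p, 0) + h p * c ≤ 0 := by
    intro p
    by_contra hcon
    push_neg at hcon
    set ε := (L (p, 0) + h p * c) / (-c) with hε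
    have hεpos : 0 < ε := div_pos hcon (by linarith)
    have hmem : (p, h p + ε) ∈ s := by simp [hs]; linarith
    have hlt := hL (p, h p + ε) hmem
    rw [hL0, hLsplit] at hlt
    have h2 : ε * (-c) = L (p, 0) + h p * c := div_mul_cancel₀ _ (by linarith : (-c) ≠ 0)
    nlinarith
  have hsup : ∀ p : ℝ × E, g (x + p) ≤ g x + L (p, 0) / c := by
    intro p
    have hk := hkey p
    have hdiv : -h p ≤ L (p, 0) / c := by
      rw [le_div_iff_of_neg hc]
      have : -h p * c = -(h p * c) := by ring
      rw [this]
      linarith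
    simp only [hh] at hdiv
    linarith
  set Φ : E →L[ℝ] ℝ := c⁻¹ • (L.comp ((ContinuousLinearMap.inl ℝ (ℝ × E) ℝ).comp
      (ContinuousLinearMap.inr ℝ ℝ E))) with hΦ
  set v1 : ℝ := L ((1, 0), 0) / c with hv1
  set v2 : E := (InnerProductSpace.toDual ℝ E).symm Φ with hv2
  have hΦapp : ∀ e : E, Φ e = L ((0, e), 0) / c := by
    intro e
    simp [hΦ, div_eq_inv_mul]
  have hinner : ∀ e : E, ⟪v2, e⟫ = L ((0, e), 0) / c := by
    intro e
    rw [hv2, InnerProductSpace.toDual_symm_apply, hΦapp]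
  have hdecomp : ∀ p : ℝ × E, L (p, 0) / c = v1 * p.1 + ⟪v2, p.2⟫ := by
    intro p
    have hsplit : ((p, (0 : ℝ)) : (ℝ × E) × ℝ) = p.1 • ((1, 0), 0) + ((0, p.2), 0) := by
      simp [Prod.ext_iff]
    rw [hsplit, map_add, L.map_smul, smul_eq_mul, hinner, hv1]
    ring
  have hsup2 : ∀ p : ℝ × E, g (x + p) ≤ g x + (v1 * p.1 + ⟪v2, p.2⟫) := by
    intro p
    have := hsup p
    rwa [hdecomp p] at this
  have habs : ∀ p : ℝ × E, |v1 * p.1 + ⟪v2, p.2⟫| ≤ C * (|p.1| + ‖p.2‖) := by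
    intro p
    have hLipx : ∀ q : ℝ × E, |g (x + q) - g x| ≤ C * (|q.1| + ‖q.2‖) := by
      intro q
      have := hLip (x + q) x
      simpa using this
    have h1 : -(C * (|p.1| + ‖p.2‖)) ≤ v1 * p.1 + ⟪v2, p.2⟫ := by
      have := hsup2 p
      have h2 := hLipx p
      rw [abs_le] at h2
      linarith
    have h2 : -(C * (|p.1| + ‖p.2‖)) ≤ v1 * (-p).1 + ⟪v2, (-p).2⟫ := by
      have := hsup2 (-p)
      have h2 := hLipx (-p)
      rw [abs_le] at h2
      simp only [Prod.fst_neg, Prod.snd_neg, abs_neg, norm_neg] at *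
      linarith
    rw [abs_le]
    refine ⟨h1, ?_⟩
    have h3 : v1 * (-p).1 + ⟪v2, (-p).2⟫ = -(v1 * p.1 + ⟪v2, p.2⟫) := by
      simp only [Prod.fst_neg, Prod.snd_neg, inner_neg_right]
      ring
    rw [h3] at h2
    linarith
  refine ⟨(v1, v2), ?_, ?_, ?_⟩
  · have := habs (1, 0)
    simpa using this
  · show ‖v2‖ ≤ C
    have hv := habs (0, v2)
    simp only [abs_zero, norm_zero, mul_zero, zero_add] at hv
    rw [real_inner_self_eq_norm_sq] at hv
    rcases eq_or_lt_of_le (norm_nonneg v2) with h0' | h0'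
    · rw [← h0']; exact hC.le
    · have habs2 : |‖v2‖ ^ 2| = ‖v2‖ ^ 2 := abs_of_nonneg (by positivity)
      nlinarith [hv]
  · intro p
    have := hsup2 (p - x)
    simpa using this

private lemma ocs_selection {A : Type*} [MeasurableSpace A] {V : Type*}
    [MetricSpace V] [ProperSpace V] [SecondCountableTopology V] [Nonempty V]
    [MeasurableSpace V] [BorelSpace V]
    (S : A → Set V) (G : A → V → ℝ)
    (hGc : ∀ a, Continuous (G a)) (hGm : ∀ v, Measurable fun a => G a v)
    (hS : ∀ a, S a = {v | G a v ≤ 0})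
    (hne : ∀ a, (S a).Nonempty) (hcpt : ∀ a, IsCompact (S a)) :
    ∃ sel : A → V, Measurable sel ∧ ∀ a, sel a ∈ S a := by
  classical
  have hSclosed : ∀ a, IsClosed (S a) := fun a => by
    rw [hS a]; exact isClosed_le (hGc a) continuous_const
  -- measurability of distance-to-S sublevel sets
  have Pmeas : ∀ (v₀ : V) (r : ℝ), MeasurableSet {a | infDist v₀ (S a) ≤ r} := by
    intro v₀ r
    rcases lt_or_ge r 0 with hr | hr
    · have : {a | infDist v₀ (S a) ≤ r} = ∅ := by
        ext a
        simp only [Set.mem_setOf_eq, Set.mem_empty_iff_false, iff_false, not_le]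
        exact lt_of_lt_of_le hr infDist_nonneg
      rw [this]; exact MeasurableSet.empty
    · haveI : Nonempty (closedBall v₀ r) := ⟨⟨v₀, mem_closedBall_self hr⟩⟩
      set t : ℕ → closedBall v₀ r := TopologicalSpace.denseSeq _ with ht
      have hdense : DenseRange t := TopologicalSpace.denseRange_denseSeq _
      have hTc : IsCompact (closedBall v₀ r) := isCompact_closedBall v₀ r
      have heq : {a | infDist v₀ (S a) ≤ r} = {a | (⨅ m, G a (t m)) ≤ 0} := by
        ext a
        obtain ⟨w₀, hw₀T, hw₀min⟩ := hTc.exists_isMinOn ⟨v₀, mem_closedBall_self hr⟩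
          (hGc a).continuousOn
        have hbdd : BddBelow (Set.range fun m => G a (t m)) := by
          refine ⟨G a w₀, ?_⟩
          rintro _ ⟨m, rfl⟩
          exact hw₀min (t m).2
        simp only [Set.mem_setOf_eq]
        constructor
        · intro hinf
          obtain ⟨w, hwS, hwd⟩ := ((hSclosed a).exists_infDist_eq_dist (hne a) v₀)
          have hwT : w ∈ closedBall v₀ r := by
            rw [mem_closedBall, dist_comm]
            rw [hwd] at hinf
            exact hinf
          have hkey : (⨅ m, G a (t m)) ≤ G a w := by
            refine le_of_forall_pos_le_add fun ε hε => ?_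
            have hcont : ContinuousAt (G a) w := (hGc a).continuousAt
            rw [Metric.continuousAt_iff] at hcont
            obtain ⟨δ, hδ, hδ'⟩ := hcont ε hε
            obtain ⟨m, hm⟩ := hdense.exists_dist_lt (⟨w, hwT⟩ : closedBall v₀ r) hδ
            have hmd : dist ((t m) : V) w < δ := by
              rw [Subtype.dist_eq] at hm
              rw [dist_comm]
              exact hm
            have := hδ' hmd
            rw [Real.dist_eq, abs_sub_lt_iff] at this
            calc (⨅ m, G a (t m)) ≤ G a (t m) := ciInf_le hbdd m
              _ ≤ G a w + ε := by linarith [this.1]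
          have : G a w ≤ 0 := by
            have := hwS
            rw [hS a] at this
            exact this
          linarith
        · intro hinf
          have hmin : G a w₀ ≤ ⨅ m, G a (t m) := by
            refine le_ciInf fun m => hw₀min (t m).2
          have : G a w₀ ≤ 0 := le_trans hmin hinf
          have hw₀S : w₀ ∈ S a := by rw [hS a]; exact this
          calc infDist v₀ (S a) ≤ dist v₀ w₀ := infDist_le_dist_of_mem hw₀S
            _ ≤ r := by rw [dist_comm]; exact hw₀T
      rw [heq]
      exact measurableSet_le (Measurable.iInf fun m => hGm _) measurable_const
  -- dense sequence in V
  set e : ℕ → V := TopologicalSpace.denseSeq V with he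
  have hedense : DenseRange e := TopologicalSpace.denseRange_denseSeq V
  set r : ℕ → ℝ := fun j => (1 / 2 : ℝ) ^ j with hr
  have hrpos : ∀ j, 0 < r j := fun j => by positivity
  -- base
  have hbase : ∀ a, ∃ i, infDist (e i) (S a) ≤ r 0 := by
    intro a
    obtain ⟨w, hw⟩ := hne a
    obtain ⟨i, hi⟩ := hedense.exists_dist_lt w (hrpos 0)
    exact ⟨i, le_trans (infDist_le_dist_of_mem hw) (by rw [dist_comm] at hi; exact hi.le)⟩
  have hν₀m : Measurable fun a => Nat.find (hbase a) :=
    measurable_find _ fun i => Pmeas (e i) (r 0)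
  -- step
  have hstep : ∀ (j : ℕ) (ν : A → ℕ), Measurable ν → (∀ a, infDist (e (ν a)) (S a) ≤ r j) →
      ∃ ν' : A → ℕ, Measurable ν' ∧ (∀ a, infDist (e (ν' a)) (S a) ≤ r (j + 1)) ∧
        (∀ a, dist (e (ν' a)) (e (ν a)) ≤ r (j + 1) + r j) := by
    intro j ν hνm hνinv
    have hex : ∀ a, ∃ i, infDist (e i) (S a) ≤ r (j + 1) ∧
        dist (e i) (e (ν a)) ≤ r (j + 1) + r j := by
      intro a
      obtain ⟨w, hwS, hwd⟩ := (hcpt a).exists_infDist_eq_dist (hne a) (e (ν a))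
      obtain ⟨i, hi⟩ := hedense.exists_dist_lt w (hrpos (j + 1))
      rw [dist_comm] at hi
      refine ⟨i, le_trans (infDist_le_dist_of_mem hwS) hi.le, ?_⟩
      calc dist (e i) (e (ν a)) ≤ dist (e i) w + dist w (e (ν a)) := dist_triangle _ _ _
        _ ≤ r (j + 1) + r j := by
            rw [dist_comm w]
            have : dist (e (ν a)) w ≤ r j := by rw [← hwd]; exact hνinv a
            linarith [hi.le]
    refine ⟨fun a => Nat.find (hex a), ?_, fun a => (Nat.find_spec (hex a)).1,
      fun a => (Nat.find_spec (hex a)).2⟩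
    refine measurable_find _ fun i => ?_
    have h1 : MeasurableSet {a | infDist (e i) (S a) ≤ r (j + 1)} := Pmeas _ _
    have h2 : MeasurableSet {a | dist (e i) (e (ν a)) ≤ r (j + 1) + r j} := by
      have : {a | dist (e i) (e (ν a)) ≤ r (j + 1) + r j} =
          ν ⁻¹' {k | dist (e i) (e k) ≤ r (j + 1) + r j} := rfl
      rw [this]
      exact hνm (measurable_from_top (f := id) (by trivial))
    exact h1.inter h2
  -- build the sequence
  set P : ℕ → (A → ℕ) → Prop := fun j ν => Measurable ν ∧ ∀ a, infDist (e (ν a)) (S a) ≤ r j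
    with hP
  have hbase' : P 0 (fun a => Nat.find (hbase a)) :=
    ⟨hν₀m, fun a => Nat.find_spec (hbase a)⟩
  let step' : ∀ j, {ν // P j ν} → {ν // P (j + 1) ν} := fun j ν =>
    ⟨Classical.choose (hstep j ν.1 ν.2.1 ν.2.2),
      (Classical.choose_spec (hstep j ν.1 ν.2.1 ν.2.2)).1,
      (Classical.choose_spec (hstep j ν.1 ν.2.1 ν.2.2)).2.1⟩
  let u : ∀ j, {ν // P j ν} := fun j => Nat.rec ⟨_, hbase'⟩ step' j
  have hu_succ : ∀ j, u (j + 1) = step' j (u j) := fun j => rfl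
  have hdist : ∀ j a, dist (e ((u (j + 1)).1 a)) (e ((u j).1 a)) ≤ r (j + 1) + r j := by
    intro j a
    have : (u (j + 1)).1 = Classical.choose (hstep j (u j).1 (u j).2.1 (u j).2.2) := by
      rw [hu_succ]
    rw [this]
    exact (Classical.choose_spec (hstep j (u j).1 (u j).2.1 (u j).2.2)).2.2 a
  set x : ℕ → A → V := fun j a => e ((u j).1 a) with hx
  have hcauchy : ∀ a, CauchySeq fun j => x j a := by
    intro a
    refine cauchySeq_of_le_geometric (1 / 2) 3 (by norm_num) fun j => ?_
    rw [dist_comm]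
    calc dist (x (j + 1) a) (x j a) ≤ r (j + 1) + r j := hdist j a
      _ ≤ 3 * (1 / 2) ^ j := by
          rw [hr]
          simp only [pow_succ]
          nlinarith [hrpos j]
  have hconv : ∀ a, ∃ l, Filter.Tendsto (fun j => x j a) Filter.atTop (nhds l) := fun a =>
    cauchySeq_tendsto_of_complete (hcauchy a)
  set sel : A → V := fun a => Classical.choose (hconv a) with hsel
  have htends : ∀ a, Filter.Tendsto (fun j => x j a) Filter.atTop (nhds (sel a)) := fun a =>
    Classical.choose_spec (hconv a)
  refine ⟨sel, ?_, ?_⟩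
  · refine measurable_of_tendsto_metrizable (f := fun j => x j) ?_ ?_
    · intro j
      exact (measurable_from_top : Measurable e).comp (u j).2.1
    · exact tendsto_pi_nhds.mpr htends
  · intro a
    have h1 : Filter.Tendsto (fun j => infDist (x j a) (S a)) Filter.atTop
        (nhds (infDist (sel a) (S a))) :=
      ((continuous_infDist_pt (S a)).tendsto (sel a)).comp (htends a)
    have h2 : Filter.Tendsto r Filter.atTop (nhds 0) := by
      rw [hr]
      exact tendsto_pow_atTop_nhds_zero_of_lt_one (by norm_num) (by norm_num)
    have h3 : infDist (sel a) (S a) ≤ 0 :=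
      le_of_tendsto_of_tendsto' h1 h2 fun j => (u j).2.2 a
    have h4 : infDist (sel a) (S a) = 0 := le_antisymm h3 infDist_nonneg
    exact ((hSclosed a).mem_iff_infDist_zero (hne a)).mpr h4

section helper
variable {A : Type*} [MeasurableSpace A] {n : ℕ}

private lemma ocs_main {A : Type*} [MeasurableSpace A] (n : ℕ) (C : ℝ) (hC : 0 < C)
    (f : A → ℝ → EuclideanSpace ℝ (Fin n) → ℝ)
    (hf_meas : Measurable fun q : A × ℝ × EuclideanSpace ℝ (Fin n) =>
      f q.1 q.2.1 q.2.2)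
    (hconc : ∀ a, ConcaveOn ℝ Set.univ
      (fun p : ℝ × EuclideanSpace ℝ (Fin n) => f a p.1 p.2))
    (hLip : ∀ a, ∀ (y₁ y₂ : ℝ) (z₁ z₂ : EuclideanSpace ℝ (Fin n)),
      |f a y₁ z₁ - f a y₂ z₂| ≤ C * (|y₁ - y₂| + ‖z₁ - z₂‖))
    (Y : A → ℝ) (hY : Measurable Y)
    (Z : A → EuclideanSpace ℝ (Fin n)) (hZ : Measurable Z) :
    ∃ sel : A → ℝ × EuclideanSpace ℝ (Fin n), Measurable sel ∧ ∀ a,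
      |(sel a).1| ≤ C ∧ ‖(sel a).2‖ ≤ C ∧
      ∀ p : ℝ × EuclideanSpace ℝ (Fin n), f a p.1 p.2 ≤ f a (Y a) (Z a) +
        ((sel a).1 * (p.1 - Y a) + ⟪(sel a).2, p.2 - Z a⟫) := by
  classical
  set V := ℝ × EuclideanSpace ℝ (Fin n) with hV
  -- Lipschitz in the pair variable and continuity
  have hLipV : ∀ a (p q : V), |f a p.1 p.2 - f a q.1 q.2| ≤ C * (|p.1 - q.1| + ‖p.2 - q.2‖) :=
    fun a p q => hLip a p.1 q.1 p.2 q.2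
  have hgcont : ∀ a, Continuous (fun p : V => f a p.1 p.2) := by
    intro a
    refine (LipschitzWith.of_dist_le_mul (K := Real.toNNReal (2 * C))
      (f := fun p : V => f a p.1 p.2) fun p q => ?_).continuous
    have h1 : |p.1 - q.1| ≤ dist p q := by
      calc |p.1 - q.1| = dist p.1 q.1 := (Real.dist_eq _ _).symm
        _ ≤ max (dist p.1 q.1) (dist p.2 q.2) := le_max_left _ _
        _ = dist p q := (Prod.dist_eq (x := p) (y := q)).symm
    have h2 : ‖p.2 - q.2‖ ≤ dist p q := by
      calc ‖p.2 - q.2‖ = dist p.2 q.2 := (dist_eq_norm _ _).symm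
        _ ≤ max (dist p.1 q.1) (dist p.2 q.2) := le_max_right _ _
        _ = dist p q := (Prod.dist_eq (x := p) (y := q)).symm
    have h3 := hLipV a p q
    rw [Real.dist_eq]
    have hcoe : ((Real.toNNReal (2 * C) : ℝ≥0) : ℝ) = 2 * C := Real.coe_toNNReal _ (by positivity)
    rw [hcoe]
    nlinarith [dist_nonneg (x := p) (y := q)]
  -- the cube
  set K : Set V := closedBall 0 C with hK
  have hKmem : ∀ v : V, v ∈ K ↔ |v.1| ≤ C ∧ ‖v.2‖ ≤ C := by
    intro v
    rw [hK, mem_closedBall_zero_iff, Prod.norm_def, max_le_iff, Real.norm_eq_abs]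
  -- the superdifferential multifunction
  set S : A → Set V := fun a => {v | v ∈ K ∧ ∀ p : V, f a p.1 p.2 ≤ f a (Y a) (Z a) +
    (v.1 * (p.1 - Y a) + ⟪v.2, p.2 - Z a⟫)} with hSdef
  have hne : ∀ a, (S a).Nonempty := by
    intro a
    obtain ⟨v, h1, h2, h3⟩ := ocs_exists_supergrad C hC (fun p : V => f a p.1 p.2)
      (hconc a) (hLipV a) (Y a, Z a)
    exact ⟨v, (hKmem v).2 ⟨h1, h2⟩, h3⟩
  -- the defect function G
  set pseq : ℕ → V := TopologicalSpace.denseSeq V with hpseq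
  have hpdense : DenseRange pseq := TopologicalSpace.denseRange_denseSeq V
  set D : A → V → ℕ → ℝ := fun a w j =>
    min (max (f a (pseq j).1 (pseq j).2 - f a (Y a) (Z a) -
      (w.1 * ((pseq j).1 - Y a) + ⟪w.2, (pseq j).2 - Z a⟫)) 0) 1 with hD
  have hD0 : ∀ a w j, 0 ≤ D a w j := fun a w j => le_min (le_max_right _ _) zero_le_one
  have hD1 : ∀ a w j, D a w j ≤ 1 := fun a w j => min_le_right _ _
  have hsummable : ∀ a w, Summable (fun j => (1 / 2 : ℝ) ^ j * D a w j) := by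
    intro a w
    refine Summable.of_nonneg_of_le (fun j => mul_nonneg (by positivity) (hD0 a w j))
      (fun j => ?_) (summable_geometric_of_lt_one (r := (1/2:ℝ)) (by norm_num) (by norm_num))
    calc (1 / 2 : ℝ) ^ j * D a w j ≤ (1 / 2 : ℝ) ^ j * 1 :=
          mul_le_mul_of_nonneg_left (hD1 a w j) (by positivity)
      _ = (1 / 2 : ℝ) ^ j := mul_one _
  set G : A → V → ℝ := fun a w => (∑' j, (1 / 2 : ℝ) ^ j * D a w j) + infDist w K with hG
  have hGc : ∀ a, Continuous (G a) := by
    intro a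
    refine Continuous.add ?_ (continuous_infDist_pt K)
    refine continuous_tsum (f := fun j (w : V) => (1 / 2 : ℝ) ^ j * D a w j)
      (fun j => ?_) (summable_geometric_of_lt_one (r := (1/2:ℝ)) (by norm_num) (by norm_num))
      (fun j w => ?_)
    · refine continuous_const.mul ?_
      refine Continuous.min (Continuous.max ?_ continuous_const) continuous_const
      exact continuous_const.sub ((continuous_fst.mul continuous_const).add
        (Continuous.inner continuous_snd continuous_const))
    · rw [Real.norm_eq_abs, abs_mul, abs_of_nonneg (a := (1/2:ℝ)^j) (by positivity)]
      calc (1 / 2 : ℝ) ^ j * |D a w j| ≤ (1 / 2 : ℝ) ^ j * 1 := by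
            refine mul_le_mul_of_nonneg_left ?_ (by positivity)
            rw [abs_of_nonneg (hD0 a w j)]
            exact hD1 a w j
        _ = (1 / 2 : ℝ) ^ j := mul_one _
  have hgx : Measurable fun a => f a (Y a) (Z a) :=
    hf_meas.comp (measurable_id.prodMk (hY.prodMk hZ))
  have hGm : ∀ w, Measurable fun a => G a w := by
    intro w
    refine Measurable.add_const ?_ _
    have hterm : ∀ j, Measurable fun a => (1 / 2 : ℝ) ^ j * D a w j := by
      intro j
      refine Measurable.const_mul ?_ _
      refine Measurable.min (Measurable.max ?_ measurable_const) measurable_const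
      have hgp : Measurable fun a => f a (pseq j).1 (pseq j).2 :=
        hf_meas.comp (measurable_id.prodMk measurable_const)
      have hpair : Measurable fun a =>
          w.1 * ((pseq j).1 - Y a) + ⟪w.2, (pseq j).2 - Z a⟫ :=
        ((measurable_const.sub hY).const_mul w.1).add
          (Measurable.inner measurable_const (measurable_const.sub hZ))
      exact (hgp.sub hgx).sub hpair
    refine measurable_of_tendsto_metrizable
      (f := fun m a => ∑ j ∈ Finset.range m, (1 / 2 : ℝ) ^ j * D a w j)
      (fun m => Finset.measurable_sum _ fun j _ => hterm j) ?_
    exact tendsto_pi_nhds.mpr fun a => (hsummable a w).hasSum.tendsto_sum_nat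
  have hSG : ∀ a, S a = {w | G a w ≤ 0} := by
    intro a
    ext w
    simp only [hSdef, Set.mem_setOf_eq, hG]
    constructor
    · rintro ⟨hwK, hwineq⟩
      have hDz : ∀ j, D a w j = 0 := by
        intro j
        have := hwineq (pseq j)
        simp only [hD]
        have hmax : max (f a (pseq j).1 (pseq j).2 - f a (Y a) (Z a) -
            (w.1 * ((pseq j).1 - Y a) + ⟪w.2, (pseq j).2 - Z a⟫)) 0 = 0 :=
          max_eq_right (by linarith)
        rw [hmax]
        exact min_eq_left zero_le_one
      have htz : (∑' j, (1 / 2 : ℝ) ^ j * D a w j) = 0 := by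
        rw [tsum_congr fun j => by rw [hDz j, mul_zero]]
        exact tsum_zero
      rw [htz, infDist_zero_of_mem hwK]
      norm_num
    · intro hGle
      have ht0 : 0 ≤ ∑' j, (1 / 2 : ℝ) ^ j * D a w j :=
        tsum_nonneg fun j => mul_nonneg (by positivity) (hD0 a w j)
      have hi0 : 0 ≤ infDist w K := infDist_nonneg
      have htz : (∑' j, (1 / 2 : ℝ) ^ j * D a w j) = 0 := by linarith
      have hiz : infDist w K = 0 := by linarith
      have hwK : w ∈ K := by
        refine ((isClosed_closedBall.mem_iff_infDist_zero ⟨0, mem_closedBall_self hC.le⟩).mpr hiz)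
      refine ⟨hwK, ?_⟩
      have hDz : ∀ j, D a w j = 0 := by
        intro j
        have hle : (1 / 2 : ℝ) ^ j * D a w j ≤ 0 := by
          rw [← htz]
          exact Summable.le_tsum (hsummable a w) j fun i _ => mul_nonneg (by positivity) (hD0 a w i)
        have hge : 0 ≤ (1 / 2 : ℝ) ^ j * D a w j := mul_nonneg (by positivity) (hD0 a w j)
        have : (1 / 2 : ℝ) ^ j * D a w j = 0 := le_antisymm hle hge
        have hpow : (1 / 2 : ℝ) ^ j ≠ 0 := by positivity
        exact (mul_eq_zero.mp this).resolve_left hpow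
      have hseq : ∀ j, f a (pseq j).1 (pseq j).2 ≤ f a (Y a) (Z a) +
          (w.1 * ((pseq j).1 - Y a) + ⟪w.2, (pseq j).2 - Z a⟫) := by
        intro j
        have hDj := hDz j
        simp only [hD] at hDj
        rcases min_eq_iff.mp hDj with hcase | hcase
        · have := hcase.1
          have hle : f a (pseq j).1 (pseq j).2 - f a (Y a) (Z a) -
              (w.1 * ((pseq j).1 - Y a) + ⟪w.2, (pseq j).2 - Z a⟫) ≤ 0 := by
            calc _ ≤ max (f a (pseq j).1 (pseq j).2 - f a (Y a) (Z a) -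
                (w.1 * ((pseq j).1 - Y a) + ⟪w.2, (pseq j).2 - Z a⟫)) 0 := le_max_left _ _
              _ = 0 := this
          linarith
        · exact absurd hcase.1 one_ne_zero
      -- extend to all p by density
      intro p
      set φ : V → ℝ := fun p => f a p.1 p.2 - f a (Y a) (Z a) -
        (w.1 * (p.1 - Y a) + ⟪w.2, p.2 - Z a⟫) with hφ
      have hφc : Continuous φ := by
        refine ((hgcont a).sub continuous_const).sub ?_
        exact (continuous_const.mul (continuous_fst.sub continuous_const)).add
          (Continuous.inner continuous_const (continuous_snd.sub continuous_const))
      have hclosed : IsClosed {p : V | φ p ≤ 0} := isClosed_le hφc continuous_const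
      have hsub : Set.range pseq ⊆ {p : V | φ p ≤ 0} := by
        rintro _ ⟨j, rfl⟩
        simp only [Set.mem_setOf_eq, hφ]
        linarith [hseq j]
      have hall : (Set.univ : Set V) ⊆ {p : V | φ p ≤ 0} := by
        rw [← hpdense.closure_range]
        exact hclosed.closure_subset_iff.mpr hsub
      have := hall (Set.mem_univ p)
      simp only [Set.mem_setOf_eq, hφ] at this
      linarith
  have hcpt : ∀ a, IsCompact (S a) := by
    intro a
    refine IsCompact.of_isClosed_subset (isCompact_closedBall 0 C) ?_ fun w hw => hw.1
    rw [hSG a]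
    exact isClosed_le (hGc a) continuous_const
  obtain ⟨sel, hselm, hselmem⟩ := ocs_selection S G hGc hGm hSG hne hcpt
  refine ⟨sel, hselm, fun a => ?_⟩
  obtain ⟨hwK, hineq⟩ := hselmem a
  obtain ⟨hb1, hb2⟩ := (hKmem (sel a)).1 hwK
  exact ⟨hb1, hb2, hineq⟩

end helper
/-- Measurable selection of an optimal control parameter for a concave standard
driver: there is a measurable `(β̄, γ̄)` with values in the cube, lying in the
effective domain of the polar `F`, attaining the conjugacy relation along
`(Y, Z)`; moreover `a ↦ F(a, β̄ a, γ̄ a)` is square-integrable whenever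
`f(·, Y, Z)`, `Y` and `Z` are. -/
theorem optimal_control_selection
    {A : Type*} [MeasurableSpace A] (n : ℕ) (C : ℝ) (hC : 0 < C)
    (f : A → ℝ → EuclideanSpace ℝ (Fin n) → ℝ)
    (hf_meas : Measurable fun q : A × ℝ × EuclideanSpace ℝ (Fin n) =>
      f q.1 q.2.1 q.2.2)
    (hconc : ∀ a, ConcaveOn ℝ Set.univ
      (fun p : ℝ × EuclideanSpace ℝ (Fin n) => f a p.1 p.2))
    (hLip : ∀ a, ∀ (y₁ y₂ : ℝ) (z₁ z₂ : EuclideanSpace ℝ (Fin n)),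
      |f a y₁ z₁ - f a y₂ z₂| ≤ C * (|y₁ - y₂| + ‖z₁ - z₂‖))
    (F : A → ℝ → EuclideanSpace ℝ (Fin n) → EReal)
    (hF : ∀ a β γ, F a β γ =
      ⨆ p : ℝ × EuclideanSpace ℝ (Fin n),
        ((f a p.1 p.2 - β * p.1 - ⟪γ, p.2⟫ : ℝ) : EReal))
    (Y : A → ℝ) (hY : Measurable Y)
    (Z : A → EuclideanSpace ℝ (Fin n)) (hZ : Measurable Z) :
    ∃ (βb : A → ℝ) (γb : A → EuclideanSpace ℝ (Fin n)),
      Measurable βb ∧ Measurable γb ∧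
      (∀ a, |βb a| ≤ C ∧ ‖γb a‖ ≤ C ∧ F a (βb a) (γb a) < ⊤ ∧
        ((f a (Y a) (Z a) : ℝ) : EReal) =
          F a (βb a) (γb a) + ((βb a * Y a + ⟪γb a, Z a⟫ : ℝ) : EReal)) ∧
      (∀ μ : Measure A,
        MemLp (fun a => f a (Y a) (Z a)) 2 μ → MemLp Y 2 μ → MemLp Z 2 μ →
        MemLp (fun a => (F a (βb a) (γb a)).toReal) 2 μ) := by
  classical
  obtain ⟨sel, hselm, hsel⟩ := ocs_main n C hC f hf_meas hconc hLip Y hY Z hZ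
  set βb : A → ℝ := fun a => (sel a).1 with hβb
  set γb : A → EuclideanSpace ℝ (Fin n) := fun a => (sel a).2 with hγb
  have hβm : Measurable βb := measurable_fst.comp hselm
  have hγm : Measurable γb := measurable_snd.comp hselm
  -- the value of F along the selection
  have hFv : ∀ a, F a (βb a) (γb a) =
      ((f a (Y a) (Z a) - (βb a * Y a + ⟪γb a, Z a⟫) : ℝ) : EReal) := by
    intro a
    obtain ⟨hb1, hb2, hineq⟩ := hsel a
    rw [hF]
    apply le_antisymm
    · refine iSup_le fun p => ?_
      rw [EReal.coe_le_coe_iff]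
      have h1 := hineq p
      have h2 : ⟪γb a, p.2 - Z a⟫ = ⟪γb a, p.2⟫ - ⟪γb a, Z a⟫ := inner_sub_right _ _ _
      rw [h2] at h1
      linarith
    · have h := le_iSup (fun p : ℝ × EuclideanSpace ℝ (Fin n) =>
        ((f a p.1 p.2 - βb a * p.1 - ⟪γb a, p.2⟫ : ℝ) : EReal)) ((Y a, Z a) :
        ℝ × EuclideanSpace ℝ (Fin n))
      refine le_trans (le_of_eq ?_) h
      exact congrArg Real.toEReal (by ring)
  refine ⟨βb, γb, hβm, hγm, fun a => ?_, ?_⟩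
  · obtain ⟨hb1, hb2, hineq⟩ := hsel a
    refine ⟨hb1, hb2, ?_, ?_⟩
    · rw [hFv a]
      exact EReal.coe_lt_top _
    · rw [hFv a, ← EReal.coe_add]
      exact congrArg Real.toEReal (by ring)
  · intro μ h1 h2 h3
    have hrepr : (fun a => (F a (βb a) (γb a)).toReal) =
        fun a => f a (Y a) (Z a) - (βb a * Y a + ⟪γb a, Z a⟫) := by
      funext a
      rw [hFv a]
      exact EReal.toReal_coe _
    rw [hrepr]
    have hβY : MemLp (fun a => βb a * Y a) 2 μ := by
      refine MemLp.of_le (h2.const_mul C) ((hβm.mul hY).aestronglyMeasurable)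
        (ae_of_all _ fun a => ?_)
      simp only [Real.norm_eq_abs, abs_mul]
      rw [abs_of_pos hC]
      exact mul_le_mul_of_nonneg_right (hsel a).1 (abs_nonneg _)
    have hγZ : MemLp (fun a => ⟪γb a, Z a⟫) 2 μ := by
      refine MemLp.of_le (h3.norm.const_mul C) ((hγm.inner hZ).aestronglyMeasurable)
        (ae_of_all _ fun a => ?_)
      simp only [Real.norm_eq_abs]

      calc |⟪γb a, Z a⟫| ≤ ‖γb a‖ * ‖Z a‖ := abs_real_inner_le_norm _ _
        _ ≤ C * ‖Z a‖ := mul_le_mul_of_nonneg_right (hsel a).2.1 (norm_nonneg _)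
        _ ≤ |C * ‖Z a‖| := le_abs_self _
    exact h1.sub (hβY.add hγZ)
end

section
/- Let (A, 𝒜) be a measurable space, let θ : A → ℝⁿ and σ : A → ℝ^{d×n} be measurable, and let C̃ ⊆ ℝ^d be a nonempty closed set. Suppose there exists ε > 0 such that ‖σ(x)^T v‖ ≥ ε‖v‖ for all x ∈ A and all v ∈ ℝ^d. Then there exists a measurable function ρ̂ : A → ℝⁿ such that for every x ∈ A, ρ̂(x) ∈ σ(x)^T(C̃) and ‖ρ̂(x) − θ(x)‖ = dist(θ(x), σ(x)^T(C̃)). Moreover, if in addition there are constants M, K > 0 with ‖θ(x)‖ ≤ M and ‖σ(x)^T v‖ ≤ K‖v‖ for all x ∈ A, v ∈ ℝ^d, and c₀ ∈ C̃ is any fixed point, then ‖ρ̂(x)‖ ≤ 2M + K‖c₀‖ for all x ∈ A. -/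
open Matrix

open Metric Set Bornology

lemma measurable_argmin_selection {A : Type*} [MeasurableSpace A] {d : ℕ}
    (C : Set (EuclideanSpace ℝ (Fin d))) (hCne : C.Nonempty) (hCcl : IsClosed C)
    (g : A → EuclideanSpace ℝ (Fin d) → ℝ)
    (hgm : ∀ c, Measurable fun x => g x c)
    (hgc : ∀ x, Continuous (g x))
    (hg0 : ∀ x c, 0 ≤ g x c)
    (hcoer : ∀ x r, IsBounded {c | c ∈ C ∧ g x c ≤ r}) :
    ∃ ρ : A → EuclideanSpace ℝ (Fin d), Measurable ρ ∧
      ∀ x, ρ x ∈ C ∧ ∀ c ∈ C, g x (ρ x) ≤ g x c := by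
  classical
  -- dense sequence in C
  haveI : Nonempty C := hCne.to_subtype
  obtain ⟨u₀, hu₀⟩ := TopologicalSpace.exists_dense_seq C
  set u : ℕ → EuclideanSpace ℝ (Fin d) := fun k => (u₀ k : _) with hu_def
  have huC : ∀ k, u k ∈ C := fun k => (u₀ k).2
  have hudense : ∀ c ∈ C, ∀ δ : ℝ, 0 < δ → ∃ k, dist (u k) c < δ := by
    intro c hc δ hδ
    obtain ⟨k, hk⟩ := hu₀.exists_dist_lt (⟨c, hc⟩ : C) hδ
    exact ⟨k, by rw [dist_comm]; simpa [Subtype.dist_eq] using hk⟩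
  -- the value function
  set m : A → ℝ := fun x => ⨅ k, g x (u k) with hm_def
  have hbdd : ∀ x, BddBelow (Set.range fun k => g x (u k)) :=
    fun x => ⟨0, by rintro y ⟨k, rfl⟩; exact hg0 x (u k)⟩
  have hm_meas : Measurable m := Measurable.iInf fun k => hgm (u k)
  have hm_le : ∀ x, ∀ c ∈ C, m x ≤ g x c := by
    intro x c hc
    refine le_of_forall_pos_le_add fun η hη => ?_
    obtain ⟨δ, hδpos, hδ⟩ := Metric.continuous_iff.1 (hgc x) c η hη
    obtain ⟨k, hk⟩ := hudense c hc δ hδpos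
    calc m x ≤ g x (u k) := ciInf_le (hbdd x) k
      _ ≤ g x c + η := by
          have h2 := hδ (u k) hk
          rw [Real.dist_eq] at h2
          have := abs_lt.1 h2
          linarith [this.2]
  have hm_le' : ∀ x k, m x ≤ g x (u k) := fun x k => ciInf_le (hbdd x) k
  -- the argmin set
  set F : A → Set (EuclideanSpace ℝ (Fin d)) := fun x => {c | c ∈ C ∧ g x c = m x} with hF_def
  have hF_closed : ∀ x, IsClosed (F x) :=
    fun x => hCcl.inter (isClosed_eq (hgc x) continuous_const)
  have hF_min : ∀ (x : A) (S : Set (EuclideanSpace ℝ (Fin d))), S ⊆ C → IsClosed S →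
      IsBounded S → S.Nonempty → ∃ c ∈ S, ∀ c' ∈ S, g x c ≤ g x c' := by
    intro x S hSC hScl hSbd hSne
    obtain ⟨c, hcS, hmin⟩ := (Metric.isCompact_of_isClosed_isBounded hScl hSbd).exists_isMinOn
      hSne ((hgc x).continuousOn)
    exact ⟨c, hcS, fun c' hc' => hmin hc'⟩
  have hF_ne : ∀ x, (F x).Nonempty := by
    intro x
    have hlt : m x < m x + 1 := by linarith
    have hlt' : (⨅ k, g x (u k)) < m x + 1 := hlt
    obtain ⟨k₀, hk₀⟩ := exists_lt_of_ciInf_lt hlt'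
    set S : Set (EuclideanSpace ℝ (Fin d)) := {c | c ∈ C ∧ g x c ≤ m x + 1} with hS_def
    have hScl : IsClosed S := hCcl.inter (isClosed_le (hgc x) continuous_const)
    obtain ⟨c, hcS, hmin⟩ := hF_min x S (fun c hc => hc.1) hScl (hcoer x _)
      ⟨u k₀, huC k₀, le_of_lt hk₀⟩
    refine ⟨c, hcS.1, le_antisymm ?_ (hm_le x c hcS.1)⟩
    refine le_ciInf fun k => ?_
    by_cases hk : g x (u k) ≤ m x + 1
    · exact hmin (u k) ⟨huC k, hk⟩
    · exact le_trans (le_trans hcS.2 (le_of_not_ge hk)) (le_refl _)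
  -- the approximate infimum over balls
  set α : ℕ → ℚ → A → ℝ := fun i q x =>
    ⨅ k : {k : ℕ // dist (u k) (u i) < (q : ℝ)}, g x (u k.1) with hα_def
  have hα_meas : ∀ i q, Measurable (α i q) :=
    fun i q => Measurable.iInf fun k => hgm (u k.1)
  -- pointwise characterisation
  have hiff : ∀ (i : ℕ) (δ : ℝ), 0 < δ → ∀ x,
      (F x ∩ Metric.ball (u i) δ).Nonempty ↔
        ∃ q : ℚ, 0 < (q : ℝ) ∧ (q : ℝ) < δ ∧
          (∃ k, dist (u k) (u i) < (q : ℝ)) ∧ α i q x = m x := by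
    intro i δ hδ x
    constructor
    · rintro ⟨c, ⟨hcC, hcval⟩, hcball⟩
      rw [Metric.mem_ball] at hcball
      obtain ⟨q, hq1, hq2⟩ := exists_rat_btwn hcball
      have hq0 : (0 : ℝ) < q := lt_of_le_of_lt dist_nonneg hq1
      have hgap : (0 : ℝ) < (q : ℝ) - dist c (u i) := by linarith
      obtain ⟨k₁, hk₁⟩ := hudense c hcC _ hgap
      have hk₁' : dist (u k₁) (u i) < (q : ℝ) :=
        lt_of_le_of_lt (dist_triangle (u k₁) c (u i)) (by linarith)
      haveI : Nonempty {k : ℕ // dist (u k) (u i) < (q : ℝ)} := ⟨⟨k₁, hk₁'⟩⟩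
      refine ⟨q, hq0, hq2, ⟨k₁, hk₁'⟩, le_antisymm ?_ ?_⟩
      · -- α ≤ m x
        refine le_of_forall_pos_le_add fun η hη => ?_
        obtain ⟨δ', hδ'pos, hδ'⟩ := Metric.continuous_iff.1 (hgc x) c η hη
        obtain ⟨k₂, hk₂⟩ := hudense c hcC _ (lt_min hδ'pos hgap)
        have hk₂q : dist (u k₂) (u i) < (q : ℝ) :=
          lt_of_le_of_lt (dist_triangle (u k₂) c (u i))
            (by have := lt_of_lt_of_le hk₂ (min_le_right _ _); linarith)
        have hbdd' : BddBelow (Set.range fun k : {k : ℕ // dist (u k) (u i) < (q : ℝ)} =>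
            g x (u k.1)) := ⟨0, by rintro y ⟨k, rfl⟩; exact hg0 x _⟩
        calc α i q x ≤ g x (u k₂) := ciInf_le hbdd' ⟨k₂, hk₂q⟩
          _ ≤ m x + η := by
              have h2 := hδ' (u k₂) (lt_of_lt_of_le hk₂ (min_le_left _ _))
              rw [Real.dist_eq] at h2
              have h3 := (abs_lt.1 h2).2
              rw [hcval] at h3; linarith
      · -- m x ≤ α
        exact le_ciInf fun k => hm_le x (u k.1) (huC k.1)
    · rintro ⟨q, hq0, hqδ, ⟨k₁, hk₁⟩, hαm⟩
      haveI : Nonempty {k : ℕ // dist (u k) (u i) < (q : ℝ)} := ⟨⟨k₁, hk₁⟩⟩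
      set T : Set (EuclideanSpace ℝ (Fin d)) := C ∩ Metric.closedBall (u i) q with hT_def
      have hTb : IsBounded T := (Metric.isBounded_closedBall).subset (inter_subset_right)
      have hTcl : IsClosed T := hCcl.inter Metric.isClosed_closedBall
      have hTne : T.Nonempty := ⟨u k₁, huC k₁, Metric.mem_closedBall.2 hk₁.le⟩
      obtain ⟨c, hcT, hmin⟩ := hF_min x T inter_subset_left hTcl hTb hTne
      have hcα : g x c ≤ α i q x := le_ciInf fun k =>
        hmin (u k.1) ⟨huC k.1, Metric.mem_closedBall.2 k.2.le⟩
      have hcm : g x c = m x := le_antisymm (hαm ▸ hcα) (hm_le x c hcT.1)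
      exact ⟨c, ⟨hcT.1, hcm⟩, Metric.mem_ball.2
        (lt_of_le_of_lt (Metric.mem_closedBall.1 hcT.2) hqδ)⟩
  -- key measurability
  have hkey : ∀ (i : ℕ) (δ : ℝ), 0 < δ →
      MeasurableSet {x | (F x ∩ Metric.ball (u i) δ).Nonempty} := by
    intro i δ hδ
    have : {x | (F x ∩ Metric.ball (u i) δ).Nonempty} =
        ⋃ q : ℚ, {x | 0 < (q : ℝ) ∧ (q : ℝ) < δ ∧
          (∃ k, dist (u k) (u i) < (q : ℝ)) ∧ α i q x = m x} := by
      ext x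
      simp only [Set.mem_setOf_eq, Set.mem_iUnion]
      exact hiff i δ hδ x
    rw [this]
    refine MeasurableSet.iUnion fun q => ?_
    by_cases hP : 0 < (q : ℝ) ∧ (q : ℝ) < δ ∧ ∃ k, dist (u k) (u i) < (q : ℝ)
    · have : {x | 0 < (q : ℝ) ∧ (q : ℝ) < δ ∧
          (∃ k, dist (u k) (u i) < (q : ℝ)) ∧ α i q x = m x} =
          {x | α i q x = m x} := by
        ext x; simp only [Set.mem_setOf_eq]
        exact ⟨fun h => h.2.2.2, fun h => ⟨hP.1, hP.2.1, hP.2.2, h⟩⟩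
      rw [this]
      exact measurableSet_eq_fun (hα_meas i q) hm_meas
    · have : {x | 0 < (q : ℝ) ∧ (q : ℝ) < δ ∧
          (∃ k, dist (u k) (u i) < (q : ℝ)) ∧ α i q x = m x} = (∅ : Set A) := by
        ext x; simp only [Set.mem_setOf_eq, Set.mem_empty_iff_false, iff_false]
        intro h; exact hP ⟨h.1, h.2.1, h.2.2.1⟩
      rw [this]; exact MeasurableSet.empty
  -- the chain of measurable approximate selections
  have hpow : ∀ j : ℕ, (0:ℝ) < (1/2:ℝ)^j := fun j => pow_pos (by norm_num) j
  set Good : ℕ → (A → ℕ) → Prop := fun j f => Measurable f ∧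
    ∀ x, (F x ∩ Metric.ball (u (f x)) ((1/2 : ℝ)^j)).Nonempty with hGood_def
  -- base function
  have hbase_ex : ∀ x, ∃ i, (F x ∩ Metric.ball (u i) ((1/2:ℝ)^0)).Nonempty := by
    intro x
    obtain ⟨c, hc⟩ := hF_ne x
    obtain ⟨k, hk⟩ := hudense c hc.1 _ (hpow 0)
    exact ⟨k, c, hc, Metric.mem_ball.2 (by rw [dist_comm]; exact hk)⟩
  have hbase : Good 0 (fun x => Nat.find (hbase_ex x)) := by
    constructor
    · exact measurable_find hbase_ex (fun i => hkey i _ (hpow 0))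
    · intro x; exact Nat.find_spec (hbase_ex x)
  -- inductive step
  have hstep : ∀ (j : ℕ) (f : {f : A → ℕ // Good j f}),
      ∃ f' : {f : A → ℕ // Good (j+1) f},
        ∀ x, dist (u (f'.1 x)) (u (f.1 x)) < 3 * (1/2:ℝ)^(j+1) := by
    rintro j ⟨f, hfm, hfinv⟩
    have hex : ∀ x, ∃ i, (F x ∩ Metric.ball (u i) ((1/2:ℝ)^(j+1))).Nonempty ∧
        dist (u i) (u (f x)) < 3 * (1/2:ℝ)^(j+1) := by
      intro x
      obtain ⟨c, hcF, hcball⟩ := hfinv x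
      obtain ⟨k, hk⟩ := hudense c hcF.1 _ (hpow (j+1))
      refine ⟨k, ⟨c, hcF, Metric.mem_ball.2 (by rw [dist_comm]; exact hk)⟩, ?_⟩
      have h1 : dist c (u (f x)) < (1/2:ℝ)^j := Metric.mem_ball.1 hcball
      have h2 : ((1/2:ℝ)^j) = 2 * (1/2:ℝ)^(j+1) := by ring
      calc dist (u k) (u (f x)) ≤ dist (u k) c + dist c (u (f x)) := dist_triangle _ _ _
        _ < (1/2:ℝ)^(j+1) + (1/2:ℝ)^j := by linarith
        _ = 3 * (1/2:ℝ)^(j+1) := by ring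
    refine ⟨⟨fun x => Nat.find (hex x), ?_, ?_⟩, ?_⟩
    · refine measurable_find hex (fun i => ?_)
      have : {x | (F x ∩ Metric.ball (u i) ((1/2:ℝ)^(j+1))).Nonempty ∧
          dist (u i) (u (f x)) < 3 * (1/2:ℝ)^(j+1)} =
          {x | (F x ∩ Metric.ball (u i) ((1/2:ℝ)^(j+1))).Nonempty} ∩
          (f ⁻¹' {n | dist (u i) (u n) < 3 * (1/2:ℝ)^(j+1)}) := rfl
      rw [this]
      exact (hkey i _ (hpow (j+1))).inter (hfm (by trivial))
    · intro x; exact (Nat.find_spec (hex x)).1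
    · intro x; exact (Nat.find_spec (hex x)).2
  choose nxt hnxt using hstep
  set K : (j : ℕ) → {f : A → ℕ // Good j f} :=
    fun j => Nat.rec ⟨fun x => Nat.find (hbase_ex x), hbase⟩ nxt j with hK_def
  set w : ℕ → A → EuclideanSpace ℝ (Fin d) := fun j x => u ((K j).1 x) with hw_def
  have hu_meas : Measurable u := measurable_from_top
  have hw_meas : ∀ j, Measurable (w j) :=
    fun j => hu_meas.comp (K j).2.1
  have hw_inv : ∀ j x, (F x ∩ Metric.ball (w j x) ((1/2:ℝ)^j)).Nonempty :=
    fun j x => (K j).2.2 x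
  have hw_chain : ∀ j x, dist (w (j+1) x) (w j x) < 3 * (1/2:ℝ)^(j+1) :=
    fun j x => hnxt j (K j) x
  -- Cauchy and limit
  have hw_cauchy : ∀ x, CauchySeq (fun j => w j x) := by
    intro x
    refine cauchySeq_of_le_geometric (1/2 : ℝ) (3/2) (by norm_num) (fun j => ?_)
    rw [dist_comm]
    have := (hw_chain j x).le
    calc dist (w (j+1) x) (w j x) ≤ 3 * (1/2:ℝ)^(j+1) := this
      _ = 3/2 * (1/2:ℝ)^j := by ring
  have hconv : ∀ x, ∃ l, Filter.Tendsto (fun j => w j x) Filter.atTop (nhds l) :=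
    fun x => cauchySeq_tendsto_of_complete (hw_cauchy x)
  choose ρ hρ using hconv
  have hρ_meas : Measurable ρ :=
    measurable_of_tendsto_metrizable hw_meas (tendsto_pi_nhds.2 hρ)
  -- the limit lies in the argmin set
  have hρF : ∀ x, ρ x ∈ F x := by
    intro x
    rw [(hF_closed x).mem_iff_infDist_zero (hF_ne x)]
    refine le_antisymm ?_ (Metric.infDist_nonneg)
    refine le_of_forall_pos_le_add fun η hη => ?_
    obtain ⟨j1, hj1⟩ := Metric.tendsto_atTop.1 (hρ x) (η/2) (by linarith)
    obtain ⟨j2, hj2⟩ := exists_pow_lt_of_lt_one (by linarith : (0:ℝ) < η/2)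
      (by norm_num : (1/2:ℝ) < 1)
    set j := max j1 j2 with hj_def
    obtain ⟨c, hcF, hcball⟩ := hw_inv j x
    have h1 : dist (w j x) (ρ x) < η/2 := hj1 j (le_max_left _ _)
    have h2 : dist c (w j x) < η/2 := by
      have := Metric.mem_ball.1 hcball
      have hle : ((1/2:ℝ))^j ≤ (1/2:ℝ)^j2 :=
        pow_le_pow_of_le_one (by norm_num) (by norm_num) (le_max_right _ _)
      linarith
    have h3 : Metric.infDist (ρ x) (F x) ≤ dist (ρ x) c :=
      Metric.infDist_le_dist_of_mem hcF
    have h4 : dist (ρ x) c ≤ dist (ρ x) (w j x) + dist (w j x) c := dist_triangle _ _ _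
    rw [dist_comm (ρ x) (w j x)] at h4
    rw [dist_comm (w j x) c] at h4
    linarith
  refine ⟨ρ, hρ_meas, fun x => ⟨(hρF x).1, fun c hc => ?_⟩⟩
  rw [(hρF x).2]
  exact hm_le x c hc

open Matrix

lemma toEuclideanLin_coord {n d : ℕ} (M : Matrix (Fin n) (Fin d) ℝ)
    (v : EuclideanSpace ℝ (Fin d)) (i : Fin n) :
    (Matrix.toEuclideanLin M v) i = ∑ j, M i j * v j := by
  simp [Matrix.toEuclideanLin_apply, Matrix.mulVec, dotProduct]

lemma le_infDist' {α : Type*} [MetricSpace α] {s : Set α} (h : s.Nonempty) {b : ℝ} {x : α}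
    (hb : ∀ y ∈ s, b ≤ dist x y) : b ≤ Metric.infDist x s := by
  by_contra hlt
  obtain ⟨y, hy, hdy⟩ := (Metric.infDist_lt_iff h).1 (lt_of_not_ge hlt)
  exact absurd hdy (not_lt.2 (hb y hy))

/-- Measurable selection of a nearest point: under uniform ellipticity of `σ`,
there is a measurable `ρ̂` with `ρ̂ x ∈ σ(x)ᵀ C̃` attaining the distance from
`θ(x)` to `σ(x)ᵀ C̃`; moreover if `θ` is bounded by `M` and `σᵀ` by `K`, then
`‖ρ̂ x‖ ≤ 2M + K‖c₀‖` for any fixed `c₀ ∈ C̃`. -/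
theorem optimal_constrained_portfolio_selection
    {A : Type*} [MeasurableSpace A] (n d : ℕ)
    (θ : A → EuclideanSpace ℝ (Fin n)) (hθ : Measurable θ)
    (σ : A → Matrix (Fin d) (Fin n) ℝ)
    (hσ : ∀ i j, Measurable fun x => σ x i j)
    (Ctil : Set (EuclideanSpace ℝ (Fin d)))
    (hCne : Ctil.Nonempty) (hCcl : IsClosed Ctil)
    (ε : ℝ) (hε : 0 < ε)
    (hell : ∀ x, ∀ v : EuclideanSpace ℝ (Fin d),
      ε * ‖v‖ ≤ ‖Matrix.toEuclideanLin (σ x)ᵀ v‖) :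
    ∃ ρ : A → EuclideanSpace ℝ (Fin n),
      Measurable ρ ∧
      (∀ x, ρ x ∈ (fun c => Matrix.toEuclideanLin (σ x)ᵀ c) '' Ctil ∧
        ‖ρ x - θ x‖ =
          Metric.infDist (θ x)
            ((fun c => Matrix.toEuclideanLin (σ x)ᵀ c) '' Ctil)) ∧
      (∀ M K : ℝ, 0 < M → 0 < K →
        (∀ x, ‖θ x‖ ≤ M) →
        (∀ x, ∀ v : EuclideanSpace ℝ (Fin d),
          ‖Matrix.toEuclideanLin (σ x)ᵀ v‖ ≤ K * ‖v‖) →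
        ∀ c₀ ∈ Ctil, ∀ x, ‖ρ x‖ ≤ 2 * M + K * ‖c₀‖) := by
  classical
  set T : A → EuclideanSpace ℝ (Fin d) → EuclideanSpace ℝ (Fin n) :=
    fun x c => Matrix.toEuclideanLin (σ x)ᵀ c with hT_def
  set g : A → EuclideanSpace ℝ (Fin d) → ℝ := fun x c => ‖T x c - θ x‖ with hg_def
  -- measurability in x for fixed c
  have hgm : ∀ c, Measurable fun x => g x c := by
    intro c
    have h1 : ∀ i : Fin n, Measurable fun x => (T x c) i - θ x i := by
      intro i
      have h2 : (fun x => (T x c) i) = fun x => ∑ j, σ x j i * c j := by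
        funext x
        rw [hT_def]
        simp only
        rw [toEuclideanLin_coord]
        simp [Matrix.transpose_apply]
      rw [show (fun x => (T x c) i - θ x i) =
        (fun x => (∑ j, σ x j i * c j) - θ x i) by funext x; rw [← congrFun h2 x]]
      exact (Finset.measurable_sum _ fun j _ => (hσ j i).mul measurable_const).sub
        ((measurable_pi_apply i).comp ((WithLp.measurable_ofLp _ _).comp hθ))
    have h3 : (fun x => g x c) = fun x => Real.sqrt (∑ i, ((T x c) i - θ x i)^2) := by
      funext x
      rw [hg_def]
      simp only
      rw [EuclideanSpace.norm_eq]
      congr 1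
      refine Finset.sum_congr rfl fun i _ => ?_
      rw [Real.norm_eq_abs, sq_abs]
      rfl
    rw [h3]
    exact Real.continuous_sqrt.measurable.comp
      (Finset.measurable_sum _ fun i _ => ((h1 i).pow_const 2))
  -- continuity in c for fixed x
  have hgc : ∀ x, Continuous (g x) := by
    intro x
    have : Continuous (T x) := (Matrix.toEuclideanLin (σ x)ᵀ).continuous_of_finiteDimensional
    exact (this.sub continuous_const).norm
  have hg0 : ∀ x c, 0 ≤ g x c := fun x c => norm_nonneg _
  -- coercivity
  have hcoer : ∀ x r, Bornology.IsBounded {c | c ∈ Ctil ∧ g x c ≤ r} := by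
    intro x r
    refine (Metric.isBounded_closedBall (x := (0 : EuclideanSpace ℝ (Fin d)))
      (r := (r + ‖θ x‖)/ε)).subset ?_
    rintro c ⟨hcC, hcg⟩
    rw [Metric.mem_closedBall, dist_zero_right]
    have h1 : ε * ‖c‖ ≤ ‖T x c‖ := hell x c
    have h2 : ‖T x c‖ ≤ ‖T x c - θ x‖ + ‖θ x‖ := by
      calc ‖T x c‖ = ‖(T x c - θ x) + θ x‖ := by congr 1; abel
        _ ≤ ‖T x c - θ x‖ + ‖θ x‖ := norm_add_le _ _
    rw [le_div_iff₀ hε, mul_comm]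
    calc ε * ‖c‖ ≤ ‖T x c‖ := h1
      _ ≤ ‖T x c - θ x‖ + ‖θ x‖ := h2
      _ ≤ r + ‖θ x‖ := by exact add_le_add_left hcg _
  obtain ⟨ρt, hρt_meas, hρt⟩ :=
    measurable_argmin_selection Ctil hCne hCcl g hgm hgc hg0 hcoer
  set ρ : A → EuclideanSpace ℝ (Fin n) := fun x => T x (ρt x) with hρ_def
  have himg_ne : ∀ x, ((fun c => Matrix.toEuclideanLin (σ x)ᵀ c) '' Ctil).Nonempty :=
    fun x => hCne.image _
  -- the distance property
  have hdist : ∀ x, ‖ρ x - θ x‖ =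
      Metric.infDist (θ x) ((fun c => Matrix.toEuclideanLin (σ x)ᵀ c) '' Ctil) := by
    intro x
    refine le_antisymm ?_ ?_
    · refine le_infDist' (himg_ne x) ?_
      rintro y ⟨c, hc, rfl⟩
      rw [dist_eq_norm, norm_sub_rev (θ x)]
      exact (hρt x).2 c hc
    · have : ρ x ∈ (fun c => Matrix.toEuclideanLin (σ x)ᵀ c) '' Ctil :=
        ⟨ρt x, (hρt x).1, rfl⟩
      calc Metric.infDist (θ x) _ ≤ dist (θ x) (ρ x) := Metric.infDist_le_dist_of_mem this
        _ = ‖ρ x - θ x‖ := by rw [dist_eq_norm]; exact norm_sub_rev _ _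
  -- measurability of ρ
  have hρ_meas : Measurable ρ := by
    have hcoords : ∀ i : Fin n, Measurable fun x => (ρ x) i := by
      intro i
      have h2 : (fun x => (ρ x) i) = fun x => ∑ j, σ x j i * (ρt x) j := by
        funext x
        rw [hρ_def, hT_def]
        simp only
        rw [toEuclideanLin_coord]
        simp [Matrix.transpose_apply]
      rw [h2]
      exact Finset.measurable_sum _ fun j _ =>
        (hσ j i).mul ((measurable_pi_apply j).comp ((WithLp.measurable_ofLp _ _).comp hρt_meas))
    exact (WithLp.measurable_toLp _ _).comp (measurable_pi_lambda _ hcoords)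
  refine ⟨ρ, hρ_meas, fun x => ⟨⟨ρt x, (hρt x).1, rfl⟩, hdist x⟩, ?_⟩
  -- the bound
  intro M K hM hK hθb hσb c₀ hc₀ x
  have h1 : ‖ρ x - θ x‖ ≤ ‖T x c₀ - θ x‖ := (hρt x).2 c₀ hc₀
  have h2 : ‖T x c₀ - θ x‖ ≤ K * ‖c₀‖ + M :=
    le_trans (norm_sub_le _ _) (add_le_add (hσb x c₀) (hθb x))
  calc ‖ρ x‖ = ‖(ρ x - θ x) + θ x‖ := by congr 1; abel
    _ ≤ ‖ρ x - θ x‖ + ‖θ x‖ := norm_add_le _ _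
    _ ≤ (K * ‖c₀‖ + M) + M := add_le_add (le_trans h1 h2) (hθb x)
    _ = 2 * M + K * ‖c₀‖ := by ring
end

section
/- Let n ≥ 1, let r, R ∈ ℝ with r ≤ R, and let θ, a ∈ ℝⁿ. Define b : ℝ × ℝⁿ → ℝ by b(y,z) = −ry − θ·z + (R − r)·max(a·z − y, 0) (so that the last term is (R−r) times the negative part of y − a·z). Then for every (β,γ) ∈ ℝ × ℝⁿ: if −R ≤ β ≤ −r and γ = −θ − (β + r)a, then sup_{(y,z) ∈ ℝ × ℝⁿ} ( βy + γ·z − b(y,z) ) = 0; otherwise sup_{(y,z) ∈ ℝ × ℝⁿ} ( βy + γ·z − b(y,z) ) = +∞. -/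
open scoped RealInnerProductSpace

/-- Convex conjugate of the driver of the wealth equation in a market with a
higher interest rate `R` for borrowing: the conjugate
`B(β,γ) = sup_{(y,z)} (βy + γ·z − b(y,z))` vanishes when `β ∈ [−R, −r]` and
`γ = −θ − (β + r)a`, and is `+∞` otherwise. -/
theorem conjugate_of_borrowing_driver
    (n : ℕ) (hn : 1 ≤ n) (r R : ℝ) (hrR : r ≤ R)
    (θ a : EuclideanSpace ℝ (Fin n))
    (b : ℝ → EuclideanSpace ℝ (Fin n) → ℝ)
    (hb : ∀ y z, b y z = -(r * y) - ⟪θ, z⟫ + (R - r) * max (⟪a, z⟫ - y) 0)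
    (β : ℝ) (γ : EuclideanSpace ℝ (Fin n)) :
    ((-R ≤ β ∧ β ≤ -r ∧ γ = -θ - (β + r) • a) →
      (⨆ p : ℝ × EuclideanSpace ℝ (Fin n),
        ((β * p.1 + ⟪γ, p.2⟫ - b p.1 p.2 : ℝ) : EReal)) = 0) ∧
    (¬(-R ≤ β ∧ β ≤ -r ∧ γ = -θ - (β + r) • a) →
      (⨆ p : ℝ × EuclideanSpace ℝ (Fin n),
        ((β * p.1 + ⟪γ, p.2⟫ - b p.1 p.2 : ℝ) : EReal)) = ⊤) := by
  constructor
  · rintro ⟨h1, h2, h3⟩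
    apply le_antisymm
    · apply iSup_le
      rintro ⟨y, z⟩
      rw [show (0 : EReal) = ((0 : ℝ) : EReal) by norm_num, EReal.coe_le_coe_iff]
      rw [hb, h3]
      have hγ : ⟪-θ - (β + r) • a, z⟫ = -⟪θ, z⟫ - (β + r) * ⟪a, z⟫ := by
        rw [inner_sub_left, inner_neg_left, real_inner_smul_left]
      rw [hγ]
      set t := ⟪a, z⟫ - y with ht
      have hmax : max t 0 = max t 0 := rfl
      rcases le_or_gt t 0 with h | h
      · rw [max_eq_right h]; nlinarith
      · rw [max_eq_left h.le]; nlinarith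
    · refine le_iSup_of_le (0, 0) ?_
      have : (β * (0:ℝ) + ⟪γ, (0 : EuclideanSpace ℝ (Fin n))⟫ - b 0 0 : ℝ) = 0 := by
        rw [hb]; simp
      rw [this]; norm_num
  · intro h
    rw [iSup_eq_top]
    intro x hx
    obtain ⟨M, hM, -⟩ := EReal.lt_iff_exists_real_btwn.mp hx
    push_neg at h
    by_cases h1 : -R ≤ β
    · by_cases h2 : β ≤ -r
      · -- γ ≠ -θ - (β+r)•a
        have hγ := h h1 h2
        set v : EuclideanSpace ℝ (Fin n) := γ + θ + (β + r) • a with hv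
        have hv0 : v ≠ 0 := by
          intro hzero
          apply hγ
          rw [hv, add_assoc] at hzero
          rw [eq_neg_of_add_eq_zero_left hzero, neg_add, ← sub_eq_add_neg]
        have hnv : (0:ℝ) < ‖v‖ ^ 2 := pow_pos (norm_pos_iff.mpr hv0) 2
        set s : ℝ := (|M| + 1) / ‖v‖ ^ 2 with hs
        refine ⟨(s * ⟪a, v⟫, s • v), ?_⟩
        refine lt_of_lt_of_le hM ?_
        rw [EReal.coe_le_coe_iff]
        rw [hb]
        have e1 : ⟪a, s • v⟫ = s * ⟪a, v⟫ := real_inner_smul_right a v s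
        have e2 : ⟪γ, s • v⟫ = s * ⟪γ, v⟫ := real_inner_smul_right γ v s
        have e3 : ⟪θ, s • v⟫ = s * ⟪θ, v⟫ := real_inner_smul_right θ v s
        rw [e1, e2, e3]
        have hmax : max (s * ⟪a, v⟫ - s * ⟪a, v⟫) 0 = 0 := by simp
        rw [hmax]
        have hvv : ⟪γ, v⟫ + ⟪θ, v⟫ + (β + r) * ⟪a, v⟫ = ‖v‖ ^ 2 := by
          have : ⟪v, v⟫ = ‖v‖ ^ 2 := real_inner_self_eq_norm_sq v
          rw [← this, hv]
          rw [inner_add_left, inner_add_left, real_inner_smul_left]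
        have key : β * (s * ⟪a, v⟫) + s * ⟪γ, v⟫ -
            (-(r * (s * ⟪a, v⟫)) - s * ⟪θ, v⟫ + (R - r) * 0) = s * ‖v‖ ^ 2 := by
          rw [← hvv]; ring
        rw [key, hs, div_mul_cancel₀ _ (ne_of_gt hnv)]
        have := abs_nonneg M
        nlinarith [le_abs_self M]
      · -- β > -r
        push_neg at h2
        have hβr : 0 < β + r := by linarith
        set y : ℝ := (|M| + 1) / (β + r) with hy
        have hy0 : 0 ≤ y := by positivity
        refine ⟨(y, 0), ?_⟩
        refine lt_of_lt_of_le hM ?_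
        rw [EReal.coe_le_coe_iff, hb]
        simp only [inner_zero_right]
        rw [max_eq_right (by linarith)]
        have hval : β * y + 0 - (-(r * y) - 0 + (R - r) * 0) = (β + r) * y := by ring
        rw [hval, hy, mul_div_cancel₀ _ (ne_of_gt hβr)]
        nlinarith [le_abs_self M]
    · -- β < -R
      push_neg at h1
      have hβR : β + R < 0 := by linarith
      set y : ℝ := (|M| + 1) / (β + R) with hy
      have hy0 : y ≤ 0 := by
        apply div_nonpos_of_nonneg_of_nonpos (by positivity) hβR.le
      refine ⟨(y, 0), ?_⟩
      refine lt_of_lt_of_le hM ?_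
      rw [EReal.coe_le_coe_iff, hb]
      simp only [inner_zero_right]
      rw [max_eq_left (by linarith)]
      have hval : β * y + 0 - (-(r * y) - 0 + (R - r) * (0 - y)) = (β + R) * y := by ring
      rw [hval, hy, mul_div_cancel₀ _ (ne_of_lt hβR)]
      nlinarith [le_abs_self M]
end
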